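/- Let d ≥ 1 and δ > 1, and set γ = (1 + δ²)/(δ² − 1). Suppose γ² > d + 1. If X is a set of n points in ℝ^d such that the distance between any two distinct points of X is either 1 or δ, then n ≤ (d+1)·(γ² − 1)/(γ² − (d+1)) + 1. -/

import Mathlib

open Matrix Finset



lemma sum_dotProduct' {ι m : Type*} [Fintype ι] [Fintype m] (f : ι → m → ℝ) (w : m → ℝ) :
    (∑ i, f i) ⬝ᵥ w = ∑ i, f i ⬝ᵥ w := by
  simp only [dotProduct, Finset.sum_apply, Finset.sum_mul]
  exact Finset.sum_comm

lemma dotProduct_sum' {ι m : Type*} [Fintype ι] [Fintype m] (w : m → ℝ) (f : ι → m → ℝ) :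
    w ⬝ᵥ (∑ i, f i) = ∑ i, w ⬝ᵥ f i := by
  simp only [dotProduct, Finset.sum_apply, Finset.mul_sum]
  exact Finset.sum_comm

lemma aux_pos_card {n N : ℕ} {T : Matrix (Fin n) (Fin n) ℝ} (hT : T.IsHermitian)
    {W : Type} [AddCommGroup W] [Module ℝ W] [FiniteDimensional ℝ W]
    (hW : Module.finrank ℝ W ≤ N)
    (φ : (Fin n → ℝ) →ₗ[ℝ] W)
    (hφ : ∀ y : Fin n → ℝ, φ y = 0 → y ⬝ᵥ (T *ᵥ y) ≤ 0) :
    (Finset.univ.filter (fun i => 0 < hT.eigenvalues i)).card ≤ N := by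
  by_contra hcon
  push_neg at hcon
  set lam := hT.eigenvalues with hlam
  set u : Fin n → (Fin n → ℝ) := fun i => ⇑(hT.eigenvectorBasis i) with hu
  have hdot : ∀ i j, u i ⬝ᵥ u j = if i = j then 1 else 0 := by
    intro i j
    have h := orthonormal_iff_ite.mp hT.eigenvectorBasis.orthonormal i j
    rw [PiLp.inner_apply] at h
    simpa [dotProduct, hu, RCLike.inner_apply, conj_trivial, mul_comm] using h
  have hmul : ∀ i, T *ᵥ u i = lam i • u i := fun i => hT.mulVec_eigenvectorBasis i
  set P := {i : Fin n // 0 < lam i}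
  have hcardP : N < Fintype.card P := by
    rwa [Fintype.card_subtype]
  set L : (P → ℝ) →ₗ[ℝ] (Fin n → ℝ) :=
    Fintype.linearCombination ℝ (fun i : P => u i.1) with hL
  have hnotinj : ¬ Function.Injective (φ.comp L) := by
    intro hinj
    have := LinearMap.finrank_le_finrank_of_injective hinj
    rw [Module.finrank_pi] at this
    omega
  rw [Function.not_injective_iff] at hnotinj
  obtain ⟨a, b, hab, hne⟩ := hnotinj
  set c : P → ℝ := a - b with hc
  have hc0 : c ≠ 0 := sub_ne_zero.mpr hne
  have hφc : φ (L c) = 0 := by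
    have h2 : φ.comp L a - φ.comp L b = 0 := by rw [hab]; simp
    simpa [hc, map_sub] using h2
  have hquad := hφ (L c) hφc
  have hLc : L c = ∑ i : P, c i • u i.1 := Fintype.linearCombination_apply ℝ _ c
  have hTv : T *ᵥ L c = ∑ i : P, (c i * lam i.1) • u i.1 := by
    rw [hLc]
    calc T *ᵥ (∑ i : P, c i • u i.1) = T.mulVecLin (∑ i : P, c i • u i.1) := rfl
      _ = ∑ i : P, c i • T.mulVecLin (u i.1) := by rw [map_sum]; simp
      _ = ∑ i : P, (c i * lam i.1) • u i.1 := by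
          refine Finset.sum_congr rfl fun i _ => ?_
          rw [Matrix.mulVecLin_apply, hmul, smul_smul]
  have hval : (L c) ⬝ᵥ (T *ᵥ L c) = ∑ i : P, (c i)^2 * lam i.1 := by
    rw [hTv, hLc]
    rw [sum_dotProduct']
    refine Finset.sum_congr rfl fun i _ => ?_
    rw [smul_dotProduct, dotProduct_sum']
    simp only [dotProduct_smul, hdot]
    rw [Finset.sum_eq_single i]
    · simp only [if_true, eq_self_iff_true, smul_eq_mul, mul_one]
      ring
    · intro j _ hji
      have hne2 : (i : Fin n) ≠ (j : Fin n) := fun h => hji (Subtype.ext h.symm)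
      simp [hne2]
    · intro h; exact absurd (Finset.mem_univ i) h
  obtain ⟨i0, hi0⟩ := Function.ne_iff.mp hc0
  have hpos : 0 < ∑ i : P, (c i)^2 * lam i.1 := by
    refine Finset.sum_pos' (fun i _ => mul_nonneg (sq_nonneg _) (le_of_lt i.2)) ?_
    refine ⟨i0, Finset.mem_univ _, ?_⟩
    have h2 : 0 < c i0 ^ 2 :=
      lt_of_le_of_ne (sq_nonneg _) (Ne.symm (pow_ne_zero 2 (by simpa using hi0)))
    exact mul_pos h2 i0.2
  rw [hval] at hquad
  linarith


lemma trace_eq_sum_eig {n : ℕ} {T : Matrix (Fin n) (Fin n) ℝ} (hT : T.IsHermitian) :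
    T.trace = ∑ i, hT.eigenvalues i := by
  set U := (hT.eigenvectorUnitary : Matrix (Fin n) (Fin n) ℝ) with hUdef
  have hU : star U * U = 1 := (Unitary.mem_iff.mp hT.eigenvectorUnitary.2).1
  conv_lhs => rw [hT.spectral_theorem, Unitary.conjStarAlgAut_apply]
  rw [Matrix.trace_mul_cycle]
  rw [← hUdef, hU, Matrix.one_mul, Matrix.trace_diagonal]
  simp

lemma trace_sq_eq_sum_eig {n : ℕ} {T : Matrix (Fin n) (Fin n) ℝ} (hT : T.IsHermitian) :
    (T * T).trace = ∑ i, (hT.eigenvalues i)^2 := by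
  set U := (hT.eigenvectorUnitary : Matrix (Fin n) (Fin n) ℝ) with hUdef
  have hU : star U * U = 1 := (Unitary.mem_iff.mp hT.eigenvectorUnitary.2).1
  set D := Matrix.diagonal (RCLike.ofReal ∘ hT.eigenvalues : Fin n → ℝ) with hD
  have h1 : T = U * D * star U := by rw [hT.spectral_theorem, Unitary.conjStarAlgAut_apply]
  have h2 : T * T = U * (D * D) * star U := by
    rw [h1]
    calc U * D * star U * (U * D * star U) = U * D * (star U * U) * D * star U := by
          simp only [Matrix.mul_assoc]
      _ = U * (D * D) * star U := by rw [hU]; simp only [Matrix.mul_one, Matrix.mul_assoc]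
  rw [h2, Matrix.trace_mul_cycle]
  rw [hU, Matrix.one_mul]
  rw [hD, Matrix.diagonal_mul_diagonal, Matrix.trace_diagonal]
  simp [pow_two]




set_option maxHeartbeats 1000000 in
/-- Theorem A: the relative bound for two-distance sets in `ℝ^d`
with distances `1, δ`, where `γ = (1+δ²)/(δ²-1)` and `γ² > d+1`. -/
theorem stmt3 (d : ℕ) (hd : 1 ≤ d) (δ : ℝ) (hδ : 1 < δ)
    (γ : ℝ) (hγ : γ = (1 + δ ^ 2) / (δ ^ 2 - 1)) (hγ2 : γ ^ 2 > (d : ℝ) + 1)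
    (n : ℕ) (X : Finset (EuclideanSpace ℝ (Fin d))) (hcard : X.card = n)
    (htwo : ∀ p ∈ X, ∀ q ∈ X, p ≠ q → dist p q = 1 ∨ dist p q = δ) :
    (n : ℝ) ≤ ((d : ℝ) + 1) * (γ ^ 2 - 1) / (γ ^ 2 - ((d : ℝ) + 1)) + 1 := by
  have hδ2 : (1:ℝ) < δ^2 := by nlinarith
  have hden : (0:ℝ) < δ^2 - 1 := by linarith
  have hγpos : 0 < γ := by rw [hγ]; apply div_pos <;> nlinarith
  have hd1 : (2:ℝ) ≤ (d:ℝ) + 1 := by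
    have : (1:ℝ) ≤ (d:ℝ) := by exact_mod_cast hd
    linarith
  have hB : (0:ℝ) < γ^2 - ((d:ℝ)+1) := by linarith
  have hγ21 : (1:ℝ) < γ^2 := by linarith
  rcases Nat.eq_zero_or_pos n with hn0 | hn
  · subst hn0
    have h0 : (0:ℝ) ≤ ((d:ℝ)+1)*(γ^2-1)/(γ^2-((d:ℝ)+1)) :=
      div_nonneg (by nlinarith) hB.le
    simpa using by linarith
  have hnpos : (0:ℝ) < n := by exact_mod_cast hn
  have hn1 : (1:ℝ) ≤ n := by exact_mod_cast hn
  -- enumerate the points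
  have hcard' : Fintype.card X = n := by rw [Fintype.card_coe, hcard]
  set e := Fintype.equivFinOfCardEq hcard' with he
  set x : Fin n → EuclideanSpace ℝ (Fin d) := fun i => (e.symm i : EuclideanSpace ℝ (Fin d)) with hx
  have hxmem : ∀ i, x i ∈ X := fun i => (e.symm i).2
  have hxinj : Function.Injective x := fun i j h => e.symm.injective (Subtype.ext h)
  set c0 : ℝ := 2 / (δ^2 - 1) with hc0def
  have hc0 : 0 < c0 := div_pos two_pos hden
  set T : Matrix (Fin n) (Fin n) ℝ := Matrix.of (fun i j => γ - c0 * dist (x i) (x j)^2) with hTdef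
  have hTsym : T.IsHermitian := by
    rw [Matrix.IsHermitian]
    ext i j
    simp [hTdef, Matrix.conjTranspose_apply, dist_comm]
  have hTdiag : ∀ i, T i i = γ := by
    intro i; simp [hTdef, dist_self]
  have hentry : ∀ i j, i ≠ j → T i j * T j i = 1 := by
    intro i j hij
    have hcomm : T j i = T i j := by simp [hTdef, dist_comm]
    have hne : x i ≠ x j := fun h => hij (hxinj h)
    rcases htwo _ (hxmem i) _ (hxmem j) hne with h | h
    · have h1 : T i j = 1 := by
        simp only [hTdef, Matrix.of_apply, h, one_pow, mul_one, hγ, hc0def]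
        field_simp
        ring
      rw [hcomm, h1]; norm_num
    · have h1 : T i j = -1 := by
        simp only [hTdef, Matrix.of_apply, h, hγ, hc0def]
        field_simp
        ring
      rw [hcomm, h1]; norm_num
  -- traces
  have htr : T.trace = (n:ℝ) * γ := by
    rw [Matrix.trace]
    simp only [Matrix.diag]
    rw [Finset.sum_congr rfl (fun i _ => hTdiag i)]
    simp [mul_comm]
  have htr2 : (T * T).trace = (n:ℝ) * (γ^2 + (n:ℝ) - 1) := by
    have hprod : ∀ i j, T i j * T j i = if i = j then γ^2 else 1 := by
      intro i j
      by_cases h : i = j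
      · subst h; rw [hTdiag, if_pos rfl]; ring
      · rw [if_neg h]; exact hentry i j h
    rw [Matrix.trace]
    simp only [Matrix.diag, Matrix.mul_apply]
    have : ∀ i : Fin n, ∑ j, T i j * T j i = γ^2 + ((n:ℝ) - 1) := by
      intro i
      rw [Finset.sum_congr rfl (fun j _ => hprod i j)]
      rw [Finset.sum_congr rfl (fun j _ => show (if i = j then γ^2 else 1)
        = 1 + (if i = j then γ^2 - 1 else 0) by split <;> ring)]
      rw [Finset.sum_add_distrib, Finset.sum_ite_eq, if_pos (Finset.mem_univ i),
        Finset.sum_const, Finset.card_univ, Fintype.card_fin, nsmul_eq_mul, mul_one]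
      ring
    rw [Finset.sum_congr rfl (fun i _ => this i), Finset.sum_const, Finset.card_univ,
      Fintype.card_fin, nsmul_eq_mul]
    ring
  set v : Fin n → ℝ := fun i => γ/2 - c0 * ‖x i‖^2 with hvdef
  have hTform : ∀ i j, T i j = 2*c0*(inner ℝ (x i) (x j) : ℝ) + v i + v j := by
    intro i j
    simp only [hTdef, Matrix.of_apply, hvdef]
    rw [dist_eq_norm, norm_sub_sq_real]
    ring
  set φ : (Fin n → ℝ) →ₗ[ℝ] (EuclideanSpace ℝ (Fin d) × ℝ) :=
    LinearMap.prod (Fintype.linearCombination ℝ x)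
      (Fintype.linearCombination ℝ (fun _ : Fin n => (1:ℝ))) with hφdef
  have hφ : ∀ y : Fin n → ℝ, φ y = 0 → y ⬝ᵥ (T *ᵥ y) ≤ 0 := by
    intro y hy
    have h1 : ∑ i, y i • x i = 0 := by
      have h := congrArg Prod.fst hy
      simpa [hφdef, Fintype.linearCombination_apply] using h
    have h2 : ∑ i, y i = 0 := by
      have h := congrArg Prod.snd hy
      simpa [hφdef, Fintype.linearCombination_apply] using h
    have hrow : ∀ i, (T *ᵥ y) i = (∑ j, v j * y j) := by
      intro i
      have hmv : (T *ᵥ y) i = ∑ j, T i j * y j := rfl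
      rw [hmv, Finset.sum_congr rfl (fun j _ => by rw [hTform i j])]
      have hinner : ∑ j, (2*c0*(inner ℝ (x i) (x j):ℝ)) * y j = 0 := by
        have hin : (inner ℝ (x i) (∑ j, y j • x j) : ℝ) = ∑ j, y j * (inner ℝ (x i) (x j) : ℝ) := by
          rw [inner_sum]
          exact Finset.sum_congr rfl fun j _ => real_inner_smul_right _ _ _
        calc ∑ j, (2*c0*(inner ℝ (x i) (x j):ℝ)) * y j
            = 2*c0 * ∑ j, y j * (inner ℝ (x i) (x j):ℝ) := by
              rw [Finset.mul_sum]; exact Finset.sum_congr rfl fun j _ => by ring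
          _ = 2*c0 * (inner ℝ (x i) (∑ j, y j • x j) : ℝ) := by rw [hin]
          _ = 0 := by rw [h1, inner_zero_right]; ring
      calc ∑ j, (2*c0*(inner ℝ (x i) (x j):ℝ) + v i + v j) * y j
          = (∑ j, (2*c0*(inner ℝ (x i) (x j):ℝ)) * y j) + v i * (∑ j, y j)
              + ∑ j, v j * y j := by
            rw [Finset.mul_sum, ← Finset.sum_add_distrib, ← Finset.sum_add_distrib]
            exact Finset.sum_congr rfl fun j _ => by ring
        _ = ∑ j, v j * y j := by rw [hinner, h2]; ring
    have hdotval : y ⬝ᵥ (T *ᵥ y) = ∑ i, y i * (∑ j, v j * y j) := by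
      simp only [dotProduct]
      exact Finset.sum_congr rfl fun i _ => by rw [hrow i]
    rw [hdotval, ← Finset.sum_mul, h2]
    simp
  have hW : Module.finrank ℝ (EuclideanSpace ℝ (Fin d) × ℝ) ≤ d + 1 := by
    rw [Module.finrank_prod, finrank_euclideanSpace_fin, Module.finrank_self]
  have hcount := aux_pos_card hTsym hW φ hφ
  set lam := hTsym.eigenvalues with hlamdef
  have hS : ∑ i, lam i = (n:ℝ)*γ := by rw [← trace_eq_sum_eig hTsym]; exact htr
  have hS2 : ∑ i, (lam i)^2 = (n:ℝ)*(γ^2 + (n:ℝ) - 1) := by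
    rw [← trace_sq_eq_sum_eig hTsym]; exact htr2
  set Pf := Finset.univ.filter (fun i => 0 < lam i) with hPf
  have hsplit := Finset.sum_filter_add_sum_filter_not Finset.univ (fun i => 0 < lam i) lam
  have hnegpart : ∑ i ∈ Finset.univ.filter (fun i => ¬ 0 < lam i), lam i ≤ 0 :=
    Finset.sum_nonpos (fun i hi => le_of_not_gt (Finset.mem_filter.mp hi).2)
  have hA : (n:ℝ)*γ ≤ ∑ i ∈ Pf, lam i := by
    rw [hPf]; linarith [hsplit, hnegpart, hS]
  have hCS : (∑ i ∈ Pf, lam i)^2 ≤ (Pf.card : ℝ) * ∑ i ∈ Pf, (lam i)^2 := by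
    have h := Finset.sum_mul_sq_le_sq_mul_sq Pf (fun _ => (1:ℝ)) lam
    simpa using h
  have hsub : ∑ i ∈ Pf, (lam i)^2 ≤ ∑ i, (lam i)^2 :=
    Finset.sum_le_sum_of_subset_of_nonneg (Finset.filter_subset _ _) (fun i _ _ => sq_nonneg _)
  have hcard_le : (Pf.card : ℝ) ≤ (d:ℝ) + 1 := by exact_mod_cast hcount
  have hq : ((n:ℝ)*γ)^2 ≤ ((d:ℝ)+1) * ((n:ℝ)*(γ^2+(n:ℝ)-1)) := by
    have h0 : 0 ≤ (n:ℝ)*γ := by positivity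
    have h1 : ((n:ℝ)*γ)^2 ≤ (∑ i ∈ Pf, lam i)^2 := pow_le_pow_left₀ h0 hA 2
    have h2 : (Pf.card:ℝ) * ∑ i ∈ Pf, (lam i)^2 ≤ ((d:ℝ)+1) * ∑ i, (lam i)^2 :=
      mul_le_mul hcard_le hsub (Finset.sum_nonneg fun i _ => sq_nonneg _) (by linarith)
    rw [← hS2]
    linarith
  have hmul2 : (n:ℝ) * ((n:ℝ) * (γ^2 - ((d:ℝ)+1))) ≤ (n:ℝ) * (((d:ℝ)+1)*(γ^2-1)) := by
    ring_nf
    ring_nf at hq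
    linarith [hq]
  have key := le_of_mul_le_mul_left hmul2 hnpos
  have hfin : (n:ℝ) ≤ ((d:ℝ)+1)*(γ^2-1)/(γ^2-((d:ℝ)+1)) := by
    rw [le_div_iff₀ hB]; exact key
  linarith
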